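/- Let K = √(√2 + 1). For every ω ∈ (0, K − 1] and every φ ∈ ℝ, defining λ₀ = (1+ω) e^{iφ/2}, λ₁ = e^{−iφ}, λ₂ = (1+ω)^{−1} e^{iφ/2}, λ₃ = −λ₀, λ₄ = −λ₁, λ₅ = −λ₂, and ω₁ := min{ |λ_i − λ_j| : 0 ≤ i < j ≤ 5, (i,j) ≠ (2,5) }, one has | |λ_j| − 1 | ≤ K ω₁ for every j ∈ {0, 1, 2, 3, 4, 5}; that is, the distance of every point λ_j to the unit circle is at most K ω₁. -/

import Mathlib

theorem stmt7 (ω φ : ℝ) (hω : 0 < ω)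
    (hωK : ω ≤ Real.sqrt (Real.sqrt 2 + 1) - 1)
    (lam : Fin 6 → ℂ)
    (h0 : lam 0 = ((1 + ω : ℝ) : ℂ) * Complex.exp (Complex.I * (φ : ℂ) / 2))
    (h1 : lam 1 = Complex.exp (-(Complex.I * (φ : ℂ))))
    (h2 : lam 2 = ((1 + ω : ℝ) : ℂ)⁻¹ * Complex.exp (Complex.I * (φ : ℂ) / 2))
    (h3 : lam 3 = -lam 0) (h4 : lam 4 = -lam 1) (h5 : lam 5 = -lam 2)
    (ω₁ : ℝ)
    (hω₁ : IsLeast {d : ℝ | ∃ i j : Fin 6, i < j ∧ (i, j) ≠ ((2 : Fin 6), (5 : Fin 6)) ∧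
      d = ‖lam i - lam j‖} ω₁) :
    ∀ j : Fin 6, |‖lam j‖ - 1| ≤ Real.sqrt (Real.sqrt 2 + 1) * ω₁ := by
  set K := Real.sqrt (Real.sqrt 2 + 1) with hKdef
  have h1ω : (0:ℝ) < 1 + ω := by linarith
  have hK : 1 + ω ≤ K := by linarith
  have m0 : ‖lam 0‖ = 1 + ω := by
    rw [h0, norm_mul, Complex.norm_real, Real.norm_eq_abs, Complex.norm_exp, abs_of_pos h1ω]; simp
  have m1 : ‖lam 1‖ = 1 := by
    rw [h1, Complex.norm_exp]; simp
  have m2 : ‖lam 2‖ = (1 + ω)⁻¹ := by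
    rw [h2, norm_mul, norm_inv, Complex.norm_real, Real.norm_eq_abs, Complex.norm_exp, abs_of_pos h1ω]; simp
  have m3 : ‖lam 3‖ = 1 + ω := by rw [h3, norm_neg]; exact m0
  have m4 : ‖lam 4‖ = 1 := by rw [h4, norm_neg]; exact m1
  have m5 : ‖lam 5‖ = (1 + ω)⁻¹ := by rw [h5, norm_neg]; exact m2
  have hinv1 : (1 + ω)⁻¹ < 1 := by
    rw [inv_lt_one_iff₀]; right; linarith
  have hinv0 : (0:ℝ) < (1 + ω)⁻¹ := by positivity
  have hq : ω / (1 + ω) = 1 - (1 + ω)⁻¹ := by field_simp; ring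
  have hqω : ω / (1 + ω) ≤ ω := div_le_self hω.le (by linarith)
  have hq1 : ω / (1 + ω) < 1 := by rw [hq]; linarith
  have hq0 : 0 < ω / (1 + ω) := by positivity
  have habs : ∀ z w : ℂ, |‖z‖ - ‖w‖| ≤ ‖z - w‖ :=
    fun z w => abs_norm_sub_norm_le z w
  have bnd : ∀ i j : Fin 6, ω / (1 + ω) ≤ ‖lam i‖ - ‖lam j‖ →
      ω / (1 + ω) ≤ ‖lam i - lam j‖ :=
    fun i j h => le_trans h (le_trans (le_abs_self _) (habs _ _))
  have bnd' : ∀ i j : Fin 6, ω / (1 + ω) ≤ ‖lam j‖ - ‖lam i‖ →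
      ω / (1 + ω) ≤ ‖lam i - lam j‖ :=
    fun i j h => le_trans h (le_trans (le_abs_self _)
      (by rw [abs_sub_comm]; exact habs _ _))
  have key : ω / (1 + ω) ≤ ω₁ := by
    obtain ⟨⟨i, j, hij, hne, heq⟩, -⟩ := hω₁
    rw [heq]
    fin_cases i <;> fin_cases j <;>
      simp only [Fin.zero_eta, Fin.mk_one, Fin.reduceFinMk, Fin.isValue] at hij hne ⊢ <;>
      first
      | exact absurd hij (by decide)
      | exact absurd rfl hne
      | (apply bnd; simp only [m0, m1, m2, m3, m4, m5]; linarith)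
      | (apply bnd'; simp only [m0, m1, m2, m3, m4, m5]; linarith)
      | (rw [show lam 0 - lam 3 = 2 * lam 0 by rw [h3]; ring, norm_mul, m0]
         simp only [Complex.norm_two]; linarith)
      | (rw [show lam 1 - lam 4 = 2 * lam 1 by rw [h4]; ring, norm_mul, m1]
         simp only [Complex.norm_two]; linarith)
  have hω₁0 : 0 < ω₁ := lt_of_lt_of_le hq0 key
  have hKω : ω ≤ K * ω₁ := by
    have h2' : (1 + ω) * (ω / (1 + ω)) ≤ (1 + ω) * ω₁ := by nlinarith
    have h3' : (1 + ω) * (ω / (1 + ω)) = ω := by field_simp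
    nlinarith
  have hK1 : (1:ℝ) ≤ K := by linarith
  have hω₁K : ω₁ ≤ K * ω₁ := by nlinarith
  intro j
  fin_cases j <;>
    simp only [Fin.zero_eta, Fin.mk_one, Fin.reduceFinMk, Fin.isValue, m0, m1, m2, m3, m4, m5] <;>
    [ (rw [add_sub_cancel_left, abs_of_pos hω]; exact hKω);
      (norm_num; positivity);
      (rw [abs_of_nonpos (by linarith), neg_sub, ← hq]; linarith);
      (rw [add_sub_cancel_left, abs_of_pos hω]; exact hKω);
      (norm_num; positivity);
      (rw [abs_of_nonpos (by linarith), neg_sub, ← hq]; linarith)]
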